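/- arXiv:1906.04897 — 2 statements merged into one kernel-verified Lean document; each statement's English description precedes it below -/
import Mathlib

section
/- Every fully normalized binary string s of length n ≥ 7 admits a restricted prefix block-interchange that, after normalization, produces a normalized binary string of length n − 4 (a 4-pblockInterchange); in particular, exchanging the block s[2]s[3] with the block s[5]s[6] is such an operation. -/
open List

/-- Normalization of a string: repeatedly merge adjacent equal symbols into one
symbol until no two adjacent symbols are equal. -/
def normalizeStr {α : Type*} [DecidableEq α] (l : List α) : List α :=
  l.destutter (· ≠ ·)

/-- A string is grouped if all occurrences of each symbol are consecutive,
i.e. after merging adjacent equal symbols every symbol occurs at most once. -/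
def Grouped {α : Type*} [DecidableEq α] (l : List α) : Prop :=
  (normalizeStr l).Nodup

/-- The prefix block-interchange β(1,x,y,z) (1-based indices, 1 ≤ x < y ≤ z ≤ n),
before normalization: s[y]…s[z] s[x+1]…s[y−1] s[1]…s[x] s[z+1]…s[n]. -/
def pbiRaw {α : Type*} (l : List α) (x y z : ℕ) : List α :=
  (l.drop (y - 1)).take (z - y + 1) ++ (l.drop x).take (y - 1 - x) ++
    l.take x ++ l.drop z

/-- Prefix block-interchange β(1,x,y,z) followed by normalization. -/
def pbi {α : Type*} [DecidableEq α] (l : List α) (x y z : ℕ) : List α :=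
  normalizeStr (pbiRaw l x y z)

/-- One prefix block-interchange operation transforming `s` into `t`. -/
def PbiStep {α : Type*} [DecidableEq α] (s t : List α) : Prop :=
  ∃ x y z, 1 ≤ x ∧ x < y ∧ y ≤ z ∧ z ≤ s.length ∧ t = pbi s x y z

/-- A restricted prefix block-interchange (2 ≤ x < y ≤ z ≤ n) keeps the first
symbol fixed, before normalization:
s[1] s[y]…s[z] s[x+1]…s[y−1] s[2]…s[x] s[z+1]…s[n]. -/
def rpbiRaw {α : Type*} (l : List α) (x y z : ℕ) : List α :=
  l.take 1 ++ (l.drop (y - 1)).take (z - y + 1) ++ (l.drop x).take (y - 1 - x) ++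
    (l.drop 1).take (x - 1) ++ l.drop z

/-- Restricted prefix block-interchange followed by normalization. -/
def rpbi {α : Type*} [DecidableEq α] (l : List α) (x y z : ℕ) : List α :=
  normalizeStr (rpbiRaw l x y z)

/-- One restricted prefix block-interchange operation transforming `s` into `t`. -/
def RpbiStep {α : Type*} [DecidableEq α] (s t : List α) : Prop :=
  ∃ x y z, 2 ≤ x ∧ x < y ∧ y ≤ z ∧ z ≤ s.length ∧ t = rpbi s x y z

/-- `StepsTo R k s t` : `t` is obtained from `s` by exactly `k` `R`-operations. -/
def StepsTo {α : Type*} (R : List α → List α → Prop) : ℕ → List α → List α → Prop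
  | 0, s, t => s = t
  | k + 1, s, t => ∃ u, R s u ∧ StepsTo R k u t


lemma fin2_trans : ∀ a b c : Fin 2, a ≠ b → b ≠ c → c = a := by decide

lemma key_lemma (a b : Fin 2) (u : List (Fin 2)) (hab : a ≠ b)
    (hc : List.Chain (· ≠ ·) a u) :
    rpbi (a :: b :: a :: b :: a :: b :: a :: u) 3 5 6 = a :: b :: a :: u := by
  have haa : ¬ (a ≠ a) := not_not_intro rfl
  have hbb : ¬ (b ≠ b) := not_not_intro rfl
  have hraw : rpbiRaw (a :: b :: a :: b :: a :: b :: a :: u) 3 5 6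
      = a :: a :: b :: b :: b :: a :: a :: u := by
    simp [rpbiRaw]
  show normalizeStr _ = _
  rw [hraw]
  unfold normalizeStr
  rw [List.destutter_cons', List.destutter'_cons_neg _ haa,
    List.destutter'_cons_pos _ hab, List.destutter'_cons_neg _ hbb,
    List.destutter'_cons_neg _ hbb, List.destutter'_cons_pos _ (Ne.symm hab),
    List.destutter'_cons_neg _ haa, List.destutter'_of_isChain_cons (R := Ne) (a := a) (l := u) hc]

/-- Every fully normalized binary string s of length n ≥ 7 admits a
restricted prefix block-interchange producing, after normalization, a normalized
binary string of length n − 4; in particular exchanging the block s[2]s[3] with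
the block s[5]s[6] is such an operation. -/
theorem stmt_6 (s : List (Fin 2)) (hnorm : s.Chain' (· ≠ ·)) (hn : 7 ≤ s.length) :
    (∃ x y z, 2 ≤ x ∧ x < y ∧ y ≤ z ∧ z ≤ s.length ∧
      (rpbi s x y z).length = s.length - 4 ∧ (rpbi s x y z).Chain' (· ≠ ·)) ∧
    (rpbi s 3 5 6).length = s.length - 4 ∧ (rpbi s 3 5 6).Chain' (· ≠ ·) :=  by
  obtain ⟨a, b, c, d, e, f, g, u, rfl⟩ :
      ∃ a b c d e f g u, s = a :: b :: c :: d :: e :: f :: g :: u := by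
    match s, hn with
    | a :: b :: c :: d :: e :: f :: g :: u, _ => exact ⟨a,b,c,d,e,f,g,u,rfl⟩
  simp only [List.Chain', List.isChain_cons_cons] at hnorm
  obtain ⟨h1, h2, h3, h4, h5, h6, hc⟩ := hnorm
  obtain rfl := fin2_trans _ _ _ h1 h2
  obtain rfl := fin2_trans _ _ _ h2 h3
  obtain rfl := fin2_trans _ _ _ h3 h4
  obtain rfl := fin2_trans _ _ _ h4 h5
  obtain rfl := fin2_trans _ _ _ h5 h6
  have key := key_lemma _ _ u h1 hc
  refine ⟨⟨3, 5, 6, by norm_num, by norm_num, by norm_num, by simp, ?_, ?_⟩, ?_, ?_⟩ <;>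
    rw [key]
  · simp
  · exact List.isChain_cons_cons.2 ⟨h1, List.isChain_cons_cons.2 ⟨Ne.symm h1, hc⟩⟩
  · simp
  · exact List.isChain_cons_cons.2 ⟨h1, List.isChain_cons_cons.2 ⟨Ne.symm h1, hc⟩⟩
end

section
/- Let s be a fully normalized binary string of length n ≥ 2. Then the grouping distance of s under restricted prefix block-interchanges satisfies d^g_rpbi(s) = ⌈(n−2)/4⌉. -/
open List

/- ############ auxiliary lemmas ############ -/


lemma stepsTo_zero {α : Type*} {R : List α → List α → Prop} {s t : List α} :
    StepsTo R 0 s t ↔ s = t := Iff.rfl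

lemma stepsTo_succ {α : Type*} {R : List α → List α → Prop} {k : ℕ} {s t : List α} :
    StepsTo R (k+1) s t ↔ ∃ u, R s u ∧ StepsTo R k u t := Iff.rfl

lemma stepsTo_one {α : Type*} {R : List α → List α → Prop} {s t : List α} (h : R s t) :
    StepsTo R 1 s t := ⟨t, h, stepsTo_zero.2 rfl⟩

lemma destutter'_len_bounds {α : Type*} [DecidableEq α] :
    ∀ (l : List α) (a : α),
      (l.destutter (· ≠ ·)).length ≤ (l.destutter' (· ≠ ·) a).length ∧
      (l.destutter' (· ≠ ·) a).length ≤ (l.destutter (· ≠ ·)).length + 1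
  | [], a => by simp
  | c :: t, a => by
    have h1 := destutter'_len_bounds t a
    have h2 := destutter'_len_bounds t c
    rw [destutter_cons']
    by_cases h : a ≠ c
    · rw [destutter'_cons_pos (R := (· ≠ ·)) _ h]
      simp only [length_cons]
      omega
    · rw [not_not] at h
      subst h
      rw [destutter'_cons_neg (R := (· ≠ ·)) _ (by simp : ¬ (a ≠ a))]
      omega

lemma destutter'_append_ge {α : Type*} [DecidableEq α] :
    ∀ (l1 : List α) (a : α) (l2 : List α),
      (l1.destutter' (· ≠ ·) a).length + (l2.destutter (· ≠ ·)).length ≤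
        ((l1 ++ l2).destutter' (· ≠ ·) a).length + 1
  | [], a, l2 => by
    have := (destutter'_len_bounds l2 a).1
    simp only [nil_append, destutter'_nil, length_cons, length_nil]
    omega
  | c :: t, a, l2 => by
    by_cases h : a ≠ c
    · rw [cons_append, destutter'_cons_pos (R := (· ≠ ·)) _ h,
        destutter'_cons_pos (R := (· ≠ ·)) _ h]
      have ih := destutter'_append_ge t c l2
      simp only [length_cons]
      omega
    · rw [not_not] at h
      subst h
      rw [cons_append, destutter'_cons_neg (R := (· ≠ ·)) _ (by simp : ¬ (a ≠ a)),
        destutter'_cons_neg (R := (· ≠ ·)) _ (by simp : ¬ (a ≠ a))]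
      exact destutter'_append_ge t a l2

lemma destutter_append_ge {α : Type*} [DecidableEq α] (l1 l2 : List α) :
    (l1.destutter (· ≠ ·)).length + (l2.destutter (· ≠ ·)).length ≤
      ((l1 ++ l2).destutter (· ≠ ·)).length + 1 := by
  cases l1 with
  | nil => simp
  | cons c t =>
    rw [cons_append, destutter_cons', destutter_cons']
    exact destutter'_append_ge t c l2

lemma destutter_five {α : Type*} [DecidableEq α] {l1 l2 l3 l4 l5 : List α}
    (c1 : l1.Chain' (· ≠ ·)) (c2 : l2.Chain' (· ≠ ·)) (c3 : l3.Chain' (· ≠ ·))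
    (c4 : l4.Chain' (· ≠ ·)) (c5 : l5.Chain' (· ≠ ·)) :
    l1.length + l2.length + l3.length + l4.length + l5.length ≤
      ((l1 ++ l2 ++ l3 ++ l4 ++ l5).destutter (· ≠ ·)).length + 4 := by
  have A := destutter_append_ge (l1 ++ l2 ++ l3 ++ l4) l5
  have B := destutter_append_ge (l1 ++ l2 ++ l3) l4
  have C := destutter_append_ge (l1 ++ l2) l3
  have D := destutter_append_ge l1 l2
  rw [destutter_of_isChain _ _ c1] at D
  rw [destutter_of_isChain _ _ c2] at D
  rw [destutter_of_isChain _ _ c3] at C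
  rw [destutter_of_isChain _ _ c4] at B
  rw [destutter_of_isChain _ _ c5] at A
  omega

lemma rpbi_step_len {u v : List (Fin 2)} (hu : u.Chain' (· ≠ ·)) (h : RpbiStep u v) :
    u.length ≤ v.length + 4 ∧ v.Chain' (· ≠ ·) := by
  obtain ⟨x, y, z, hx, hxy, hyz, hz, rfl⟩ := h
  refine ⟨?_, isChain_destutter _ _⟩
  show u.length ≤
    ((u.take 1 ++ (u.drop (y - 1)).take (z - y + 1) ++ (u.drop x).take (y - 1 - x) ++
      (u.drop 1).take (x - 1) ++ u.drop z).destutter (· ≠ ·)).length + 4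
  have key := destutter_five (hu.take 1) ((hu.drop (y-1)).take (z - y + 1))
    ((hu.drop x).take (y - 1 - x)) ((hu.drop 1).take (x - 1)) (hu.drop z)
  have hlen : u.length ≤ (u.take 1).length + ((u.drop (y - 1)).take (z - y + 1)).length +
      ((u.drop x).take (y - 1 - x)).length + ((u.drop 1).take (x - 1)).length +
      (u.drop z).length := by
    simp only [length_take, length_drop]
    omega
  omega

lemma grouped_len {t : List (Fin 2)} (ht : t.Chain' (· ≠ ·)) (hg : Grouped t) :
    t.length ≤ 2 := by
  unfold Grouped normalizeStr at hg
  rw [destutter_of_isChain _ _ ht] at hg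
  have := hg.length_le_card
  simpa using this

lemma lb_main : ∀ (k : ℕ) (u t : List (Fin 2)), u.Chain' (· ≠ ·) →
    StepsTo RpbiStep k u t → Grouped t → u.length ≤ 4 * k + 2 := by
  intro k
  induction k with
  | zero =>
    intro u t hu hst hg
    have h : u = t := hst
    subst h
    simpa using grouped_len hu hg
  | succ k ih =>
    intro u t hu hst hg
    obtain ⟨v, hv, hst⟩ := stepsTo_succ.1 hst
    obtain ⟨hlen, hcv⟩ := rpbi_step_len hu hv
    have := ih v t hcv hst hg
    omega

/- ################ alternating lists ################ -/

def alt : Fin 2 → ℕ → List (Fin 2)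
  | _, 0 => []
  | a, n+1 => a :: alt (a+1) n

lemma alt_succ (a : Fin 2) (n : ℕ) : alt a (n+1) = a :: alt (a+1) n := rfl

@[simp] lemma alt_length : ∀ (a : Fin 2) (n : ℕ), (alt a n).length = n
  | _, 0 => rfl
  | a, n+1 => by simp [alt_succ, alt_length]

lemma fin2_add_add (x : Fin 2) : x + 1 + 1 = x := by fin_cases x <;> rfl

lemma fin2_ne (x : Fin 2) : x ≠ x + 1 := by fin_cases x <;> decide

lemma fin2_succ_of_ne : ∀ a c : Fin 2, a ≠ c → c = a + 1 := by decide

lemma alt_chain : ∀ (n : ℕ) (a : Fin 2), (alt a n).Chain' (· ≠ ·)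
  | 0, a => by simp [alt, Chain']
  | 1, a => by simp [alt, Chain']
  | n+2, a => by
    have ih := alt_chain (n+1) (a+1)
    rw [alt_succ, alt_succ] at *
    exact List.isChain_cons_cons.2 ⟨fin2_ne a, by rw [← alt_succ]; exact ih⟩

lemma eq_alt : ∀ (t : List (Fin 2)) (a : Fin 2), (a :: t).Chain' (· ≠ ·) →
    a :: t = alt a (t.length + 1)
  | [], a, _ => by simp [alt_succ, alt]
  | c :: t', a, h => by
    obtain ⟨h1, h2⟩ := List.isChain_cons_cons.1 h
    have hc : c = a + 1 := fin2_succ_of_ne a c h1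
    have ih := eq_alt t' c h2
    rw [alt_succ]
    simp only [length_cons]
    rw [← hc, ← ih]

lemma alt_expand (m : ℕ) (a : Fin 2) :
    alt a (m+7) = a :: (a+1) :: a :: (a+1) :: a :: (a+1) :: alt a (m+1) := by
  simp [alt_succ, fin2_add_add, show m+7 = (m+1)+6 by omega, show m+6 = (m+1)+5 by omega,
    show m+5 = (m+1)+4 by omega, show m+4 = (m+1)+3 by omega, show m+3 = (m+1)+2 by omega,
    show m+2 = (m+1)+1 by omega]

lemma rpbi_key (m : ℕ) (a : Fin 2) : rpbi (alt a (m+7)) 3 5 6 = alt a (m+3) := by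
  have hne : (a : Fin 2) ≠ a + 1 := fin2_ne a
  have hne' : (a : Fin 2) + 1 ≠ a := (fin2_ne a).symm
  have hraw : rpbiRaw (alt a (m+7)) 3 5 6
      = a :: a :: (a+1) :: (a+1) :: (a+1) :: a :: alt a (m+1) := by
    rw [alt_expand]
    rfl
  have hch : List.Chain (· ≠ ·) a (alt (a+1) m) := alt_chain (m+1) a
  have htgt : alt a (m+3) = a :: (a+1) :: (a :: alt (a+1) m) := by
    rw [alt_succ, alt_succ, fin2_add_add, alt_succ]
  rw [rpbi, normalizeStr, hraw, show alt a (m+1) = a :: alt (a+1) m from rfl,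
    destutter_cons',
    destutter'_cons_neg (R := (· ≠ ·)) _ (by simp : ¬ (a ≠ a)),
    destutter'_cons_pos (R := (· ≠ ·)) _ hne,
    destutter'_cons_neg (R := (· ≠ ·)) _ (by simp : ¬ (a+1 ≠ a+1)),
    destutter'_cons_neg (R := (· ≠ ·)) _ (by simp : ¬ (a+1 ≠ a+1)),
    destutter'_cons_pos (R := (· ≠ ·)) _ hne',
    destutter'_cons_neg (R := (· ≠ ·)) _ (by simp : ¬ (a ≠ a)),
    destutter'_of_isChain_cons (h := (show (a :: alt (a+1) m).IsChain (· ≠ ·) from hch)), htgt]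

lemma up_main : ∀ (n : ℕ), 2 ≤ n → ∀ a : Fin 2,
    ∃ t, StepsTo RpbiStep ((n - 2 + 3) / 4) (alt a n) t ∧ Grouped t := by
  intro n
  induction n using Nat.strong_induction_on with
  | _ n ih =>
    intro hn a
    rcases lt_or_ge n 7 with h7 | h7
    · interval_cases n
      · refine ⟨alt a 2, ?_, ?_⟩
        · have h : (2 - 2 + 3) / 4 = 0 := by norm_num
          rw [h]
          exact stepsTo_zero.2 rfl
        · fin_cases a <;> (unfold Grouped; decide)
      · refine ⟨rpbi (alt a 3) 2 3 3, ?_, ?_⟩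
        · have h : (3 - 2 + 3) / 4 = 1 := by norm_num
          rw [h]
          exact stepsTo_one ⟨2, 3, 3, by norm_num, by norm_num, by norm_num, by simp, rfl⟩
        · fin_cases a <;> (unfold Grouped; decide)
      · refine ⟨rpbi (alt a 4) 2 3 4, ?_, ?_⟩
        · have h : (4 - 2 + 3) / 4 = 1 := by norm_num
          rw [h]
          exact stepsTo_one ⟨2, 3, 4, by norm_num, by norm_num, by norm_num, by simp, rfl⟩
        · fin_cases a <;> (unfold Grouped; decide)
      · refine ⟨rpbi (alt a 5) 2 5 5, ?_, ?_⟩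
        · have h : (5 - 2 + 3) / 4 = 1 := by norm_num
          rw [h]
          exact stepsTo_one ⟨2, 5, 5, by norm_num, by norm_num, by norm_num, by simp, rfl⟩
        · fin_cases a <;> (unfold Grouped; decide)
      · refine ⟨rpbi (alt a 6) 2 5 5, ?_, ?_⟩
        · have h : (6 - 2 + 3) / 4 = 1 := by norm_num
          rw [h]
          exact stepsTo_one ⟨2, 5, 5, by norm_num, by norm_num, by norm_num, by simp, rfl⟩
        · fin_cases a <;> (unfold Grouped; decide)
    · obtain ⟨m, rfl⟩ : ∃ m, n = m + 7 := ⟨n - 7, by omega⟩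
      obtain ⟨t, ht, hg⟩ := ih (m+3) (by omega) (by omega) a
      refine ⟨t, ?_, hg⟩
      have hk : (m + 7 - 2 + 3) / 4 = (m + 3 - 2 + 3) / 4 + 1 := by omega
      rw [hk, stepsTo_succ]
      exact ⟨alt a (m+3), ⟨3, 5, 6, by norm_num, by norm_num, by norm_num,
        by rw [alt_length]; omega, (rpbi_key m a).symm⟩, ht⟩

/-- For a fully normalized binary string s of length n ≥ 2, the
grouping distance under restricted prefix block-interchanges equals ⌈(n−2)/4⌉. -/
theorem stmt_8 (s : List (Fin 2)) (hnorm : s.Chain' (· ≠ ·)) (hn : 2 ≤ s.length) :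
    IsLeast {k | ∃ t, StepsTo RpbiStep k s t ∧ Grouped t}
      ((s.length - 2 + 3) / 4) := by
  constructor
  · obtain ⟨a, t', rfl⟩ : ∃ a t', s = a :: t' := by
      cases s with
      | nil => simp at hn
      | cons a t' => exact ⟨a, t', rfl⟩
    have hs : a :: t' = alt a (t'.length + 1) := eq_alt t' a hnorm
    rw [hs]
    have := up_main (t'.length + 1) (by simpa using hn) a
    simpa using this
  · intro k hk
    obtain ⟨t, hst, hg⟩ := hk
    have := lb_main k s t hnorm hst hg
    omega
end
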